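/- Let g be a positive definite Hermitian n×n complex matrix and A an arbitrary n×n complex matrix. Then λ(A,g) := (1/2)(√g)^{−1} I_g(−A* g − g A)(√g)^{−1} + √g · A · (√g)^{−1} is skew-Hermitian: λ(A,g)* = −λ(A,g). -/

import Mathlib

open MeasureTheory Complex Matrix
open scoped ComplexOrder

/-- The complex matrix power `A ^ z` of a Hermitian matrix `A`, defined by functional
calculus: apply `fun x => x ^ z` to the eigenvalues of `A` in a unitary eigenbasis.
(Junk value `0` if `A` is not Hermitian.) -/
noncomputable def matCpow {n : ℕ} (A : Matrix (Fin n) (Fin n) ℂ) (z : ℂ) :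
    Matrix (Fin n) (Fin n) ℂ :=
  @dite _ A.IsHermitian (Classical.dec _)
    (fun hA => (hA.eigenvectorUnitary : Matrix (Fin n) (Fin n) ℂ) *
        Matrix.diagonal (fun i => (hA.eigenvalues i : ℂ) ^ z) *
        star (hA.eigenvectorUnitary : Matrix (Fin n) (Fin n) ℂ))
    (fun _ => 0)

/-- The positive semidefinite square root of a positive semidefinite matrix.
(Junk value `0` if `A` is not positive semidefinite.) -/
noncomputable def matSqrt {n : ℕ} (A : Matrix (Fin n) (Fin n) ℂ) :
    Matrix (Fin n) (Fin n) ℂ :=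
  @dite _ A.PosSemidef (Classical.dec _)
    (fun h => (h.1.eigenvectorUnitary : Matrix (Fin n) (Fin n) ℂ) *
      Matrix.diagonal ((↑) ∘ Real.sqrt ∘ h.1.eigenvalues) *
      (star h.1.eigenvectorUnitary : Matrix (Fin n) (Fin n) ℂ)) (fun _ => 0)

lemma matSqrt_spec {n : ℕ} {g : Matrix (Fin n) (Fin n) ℂ} (hpsd : g.PosSemidef) :
    (matSqrt g).PosSemidef ∧ matSqrt g * matSqrt g = g := by
  classical
  set U : Matrix (Fin n) (Fin n) ℂ := (hpsd.1.eigenvectorUnitary : Matrix (Fin n) (Fin n) ℂ)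
    with hUdef
  have hdef : matSqrt g = U * Matrix.diagonal ((↑) ∘ Real.sqrt ∘ hpsd.1.eigenvalues) * star U := by
    rw [matSqrt, dif_pos hpsd]
  have hU : star U * U = 1 := Unitary.star_mul_self_of_mem hpsd.1.eigenvectorUnitary.2
  constructor
  · rw [hdef]
    have hD : (Matrix.diagonal ((↑) ∘ Real.sqrt ∘ hpsd.1.eigenvalues) :
        Matrix (Fin n) (Fin n) ℂ).PosSemidef := by
      rw [posSemidef_diagonal_iff]; intro i
      exact Complex.zero_le_real.mpr (Real.sqrt_nonneg _)
    simpa [Matrix.star_eq_conjTranspose] using hD.mul_mul_conjTranspose_same U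
  · rw [hdef]
    conv_rhs => rw [hpsd.1.spectral_theorem, Unitary.conjStarAlgAut_apply]
    calc U * Matrix.diagonal ((↑) ∘ Real.sqrt ∘ hpsd.1.eigenvalues) * star U *
          (U * Matrix.diagonal ((↑) ∘ Real.sqrt ∘ hpsd.1.eigenvalues) * star U)
        = U * (Matrix.diagonal ((↑) ∘ Real.sqrt ∘ hpsd.1.eigenvalues) * (star U * U) *
          Matrix.diagonal ((↑) ∘ Real.sqrt ∘ hpsd.1.eigenvalues)) * star U := by
          simp only [Matrix.mul_assoc]
      _ = _ := by
          rw [hU, Matrix.mul_one, Matrix.diagonal_mul_diagonal]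
          refine congrArg (fun D => U * Matrix.diagonal D * star U) ?_
          funext i
          simp only [Function.comp_apply]
          rw [← Complex.ofReal_mul, Real.mul_self_sqrt (hpsd.eigenvalues_nonneg i)]
          rfl

/-- `I_g(X) := ∫_ℝ (√g)^{it+1/2} X (√g)^{-it-1/2} dt / cosh (π t)`, taken entrywise. -/
noncomputable def Ig {n : ℕ} (g X : Matrix (Fin n) (Fin n) ℂ) :
    Matrix (Fin n) (Fin n) ℂ :=
  Matrix.of fun i j => ∫ t : ℝ,
    (matCpow (matSqrt g) (Complex.I * t + 1 / 2) * X *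
      matCpow (matSqrt g) (-(Complex.I * t) - 1 / 2)) i j / (Real.cosh (Real.pi * t) : ℂ)

/-- The infinitesimal natural lift
`λ(A,g) := (1/2)(√g)⁻¹ I_g(−A* g − g A)(√g)⁻¹ + √g · A · (√g)⁻¹`. -/
noncomputable def lamLift {n : ℕ} (A g : Matrix (Fin n) (Fin n) ℂ) :
    Matrix (Fin n) (Fin n) ℂ :=
  (1 / 2 : ℂ) • ((matSqrt g)⁻¹ * Ig g (-(star A * g) - g * A) * (matSqrt g)⁻¹) +
    matSqrt g * A * (matSqrt g)⁻¹





section MatrixPart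
open Set
open scoped Real

noncomputable def sV (x : ℝ) : ℂ := 1/2 + ((x / (2*π) : ℝ) : ℂ) * Complex.I

lemma cpow_ofReal_pos {r : ℝ} (hr : 0 < r) (z : ℂ) :
    (r:ℂ) ^ z = Complex.exp ((Real.log r : ℂ) * z) := by
  rw [Complex.cpow_def_of_ne_zero (by exact_mod_cast hr.ne'), Complex.ofReal_log hr.le]

section phi
variable (t : ℝ)

noncomputable def Ef (t : ℝ) : ℝ := Real.exp (2*π*t)
noncomputable def φf (t : ℝ) : ℝ := Ef t / (1 + Ef t)

lemma Ef_pos : 0 < Ef t := Real.exp_pos _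
lemma den_pos : 0 < 1 + Ef t := by linarith [Ef_pos t]
lemma φf_mem : φf t ∈ Ioo (0:ℝ) 1 :=
  ⟨div_pos (Ef_pos t) (den_pos t), (div_lt_one (den_pos t)).mpr (by linarith [Ef_pos t])⟩

lemma one_sub_φf : 1 - φf t = (1 + Ef t)⁻¹ := by
  have := (den_pos t).ne'
  rw [φf]
  field_simp
  ring

lemma φf_strictMono : StrictMono φf := by
  intro a b hab
  have h1 : Ef a < Ef b := Real.exp_lt_exp.mpr (by nlinarith [Real.pi_pos])
  have h2 : (1 + Ef b)⁻¹ < (1 + Ef a)⁻¹ := by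
    apply inv_strictAnti₀ (den_pos a); linarith
  have e1 := one_sub_φf a
  have e2 := one_sub_φf b
  linarith

lemma φf_image : φf '' univ = Ioo (0:ℝ) 1 := by
  ext y
  simp only [image_univ, mem_range, mem_Ioo]
  constructor
  · rintro ⟨t, rfl⟩; exact φf_mem t
  · rintro ⟨h0, h1⟩
    have h1y : 0 < 1 - y := by linarith
    refine ⟨Real.log (y/(1-y)) / (2*π), ?_⟩
    have hE : Ef (Real.log (y/(1-y)) / (2*π)) = y/(1-y) := by
      rw [Ef, show 2*π*(Real.log (y/(1-y))/(2*π)) = Real.log (y/(1-y)) by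
        field_simp]
      exact Real.exp_log (div_pos h0 h1y)
    rw [φf, hE]
    rw [show 1 + y/(1-y) = 1/(1-y) by field_simp; ring]
    field_simp

lemma φf_hasDeriv : HasDerivAt φf (2*π*Ef t/(1+Ef t)^2) t := by
  have hE : HasDerivAt Ef (2*π*Ef t) t := by
    have h2 := ((hasDerivAt_id t).const_mul (2*π)).exp
    simp only [mul_one, id_eq] at h2
    rw [show 2*π*Ef t = Real.exp (2*π*t) * (2*π) from by rw [Ef]; ring]
    exact h2
  have hden : HasDerivAt (fun u => 1 + Ef u) (2*π*Ef t) t := hE.const_add 1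
  have h := hE.div hden (den_pos t).ne'
  show HasDerivAt (Ef / fun u => 1 + Ef u) _ t
  exact h.congr_deriv (by ring)
end phi

lemma beta_val (x : ℝ) :
    Complex.betaIntegral (sV x) (1 - sV x) = (π : ℂ) / (Real.cosh (x/2) : ℂ) := by
  have hre : (sV x).re = 1/2 := by simp [sV, Complex.div_im, Complex.div_re]
  have hs : 0 < (sV x).re := by rw [hre]; norm_num
  have h2 : 0 < (1 - sV x).re := by simp [Complex.sub_re, hre]; norm_num
  have h := Complex.Gamma_mul_Gamma_eq_betaIntegral hs h2
  rw [add_sub_cancel, Complex.Gamma_one, one_mul] at h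
  rw [← h, Complex.Gamma_mul_Gamma_one_sub]
  congr 1
  have hr : π * (x/(2*π)) = x/2 := by
    field_simp
  have h3 : (π:ℂ) * sV x = ((x/2 : ℝ):ℂ) * Complex.I + (π:ℂ)/2 := by
    calc (π:ℂ) * sV x = ((π:ℝ):ℂ) * ((x/(2*π) : ℝ):ℂ) * Complex.I + (π:ℂ)/2 := by
          rw [sV]; ring
      _ = ((x/2 : ℝ):ℂ) * Complex.I + (π:ℂ)/2 := by rw [← Complex.ofReal_mul, hr]
  rw [h3, Complex.sin_add_pi_div_two, Complex.cos_mul_I, ← Complex.ofReal_cosh]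

lemma cosh_aux (t : ℝ) :
    2*π*Ef t/(1+Ef t)^2 * Real.exp (-(π*t)) * (1 + Ef t) = π / Real.cosh (π*t) := by
  have key : Real.exp (π*t) * (Real.exp (π*t) + Real.exp (-(π*t))) = 1 + Ef t := by
    rw [mul_add, ← Real.exp_add, ← Real.exp_add, Ef,
      show π*t+π*t = 2*π*t by ring, show π*t + -(π*t) = 0 by ring, Real.exp_zero]
    ring
  have hE := Ef_pos t
  have hden := den_pos t
  have hE2 : Ef t * Real.exp (-(π*t)) = Real.exp (π*t) := by
    rw [Ef, ← Real.exp_add, show 2*π*t + -(π*t) = π*t by ring]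
  rw [show 2*π*Ef t/(1+Ef t)^2 * Real.exp (-(π*t)) * (1 + Ef t)
      = 2*π*(Ef t * Real.exp (-(π*t)))/(1+Ef t) from by field_simp,
    hE2, Real.cosh_eq, div_eq_div_iff hden.ne' (by positivity)]
  linear_combination π * key

lemma fourier_sech (x : ℝ) :
    ∫ t : ℝ, Complex.exp (((x * t : ℝ) : ℂ) * Complex.I) / (Real.cosh (π * t) : ℂ)
      = 1 / (Real.cosh (x/2) : ℂ) := by
  have hπ : (π:ℂ) ≠ 0 := by exact_mod_cast Real.pi_ne_zero
  have hbeta : Complex.betaIntegral (sV x) (1 - sV x)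
      = ∫ y in Ioo (0:ℝ) 1, (y:ℂ) ^ (sV x - 1) * ((1:ℂ) - (y:ℂ)) ^ (-sV x) := by
    rw [Complex.betaIntegral, intervalIntegral.integral_of_le zero_le_one,
      integral_Ioc_eq_integral_Ioo]
    congr 1
    ext y
    rw [sub_sub_cancel_left]
  have hcov := integral_image_eq_integral_abs_deriv_smul MeasurableSet.univ
    (fun t _ => (φf_hasDeriv t).hasDerivWithinAt)
    (φf_strictMono.injective.injOn)
    (fun y => (y:ℂ) ^ (sV x - 1) * ((1:ℂ) - (y:ℂ)) ^ (-sV x))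
  rw [φf_image, setIntegral_univ] at hcov
  have hpt : ∀ t : ℝ, |2*π*Ef t/(1+Ef t)^2| •
      ((φf t:ℂ) ^ (sV x - 1) * ((1:ℂ) - (φf t:ℂ)) ^ (-sV x))
      = (π:ℂ) * (Complex.exp (((x * t : ℝ) : ℂ) * Complex.I) / (Real.cosh (π * t) : ℂ)) := by
    intro t
    have hE := Ef_pos t
    have hden := den_pos t
    have hφ := φf_mem t
    have habs : |2*π*Ef t/(1+Ef t)^2| = 2*π*Ef t/(1+Ef t)^2 := by
      rw [abs_of_pos]; positivity
    have h1φ : (1:ℂ) - (φf t:ℂ) = ((1 - φf t : ℝ) : ℂ) := by push_cast; ring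
    have hlogφ : Real.log (φf t) = 2*π*t - Real.log (1 + Ef t) := by
      rw [φf, Real.log_div hE.ne' hden.ne', Ef, Real.log_exp]
    have hlog1φ : Real.log (1 - φf t) = -Real.log (1 + Ef t) := by
      rw [one_sub_φf, Real.log_inv]
    rw [h1φ, cpow_ofReal_pos hφ.1, cpow_ofReal_pos (by linarith [hφ.2] : (0:ℝ) < 1 - φf t),
      habs, hlogφ, hlog1φ, ← Complex.exp_add]
    set L := Real.log (1 + Ef t) with hL
    have hexp : ((2*π*t - L : ℝ):ℂ) * (sV x - 1) + ((-L : ℝ):ℂ) * (-sV x)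
        = ((-(π*t) : ℝ):ℂ) + ((x * t : ℝ) : ℂ) * Complex.I + ((L:ℝ):ℂ) := by
      simp only [sV]
      push_cast
      field_simp
      ring
    rw [hexp, Complex.exp_add, Complex.exp_add, ← Complex.ofReal_exp, ← Complex.ofReal_exp,
      Real.exp_log hden, Complex.real_smul]
    have hc : ((2*π*Ef t/(1+Ef t)^2 : ℝ):ℂ) *
        (((Real.exp (-(π*t)) : ℝ):ℂ) * Complex.exp (((x*t:ℝ):ℂ)*Complex.I) * ((1+Ef t : ℝ):ℂ))
        = ((2*π*Ef t/(1+Ef t)^2 * Real.exp (-(π*t)) * (1+Ef t) : ℝ):ℂ) *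
          Complex.exp (((x*t:ℝ):ℂ)*Complex.I) := by
      push_cast
      ring
    rw [hc, cosh_aux t]
    have hcosh : ((Real.cosh (π*t) : ℝ):ℂ) ≠ 0 := by
      exact_mod_cast (Real.cosh_pos (x := π*t)).ne'
    push_cast
    ring
  have hfin : (π:ℂ) * ∫ t : ℝ, Complex.exp (((x * t : ℝ) : ℂ) * Complex.I) /
      (Real.cosh (π * t) : ℂ) = (π:ℂ) / (Real.cosh (x/2) : ℂ) := by
    rw [← MeasureTheory.integral_const_mul, ← beta_val x, hbeta, hcov]
    congr 1
    ext t
    exact (hpt t).symm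
  have := hfin
  rw [show (π:ℂ) / (Real.cosh (x/2) : ℂ) = (π:ℂ) * (1 / (Real.cosh (x/2) : ℂ)) by ring] at this
  exact mul_left_cancel₀ hπ this

lemma integrable_sech : Integrable (fun t : ℝ => (Real.cosh (π*t))⁻¹) := by
  have cont : Continuous fun t : ℝ => (Real.cosh (π*t))⁻¹ :=
    (Real.continuous_cosh.comp (continuous_const.mul continuous_id)).inv₀
      (fun t => (Real.cosh_pos (x := π*t)).ne')
  have hIoi : IntegrableOn (fun t : ℝ => (Real.cosh (π*t))⁻¹) (Ioi 0) := by
    refine Integrable.mono' ((exp_neg_integrableOn_Ioi 0 Real.pi_pos).const_mul 2)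
      cont.aestronglyMeasurable.restrict ?_
    refine Filter.Eventually.of_forall fun t => ?_
    rw [Real.norm_eq_abs, abs_of_pos (inv_pos.mpr (Real.cosh_pos (x := π*t)))]
    have h1 : Real.exp (π*t) / 2 ≤ Real.cosh (π*t) := by
      rw [Real.cosh_eq]; have := (Real.exp_pos (-(π*t))).le; linarith
    have h2 : (0:ℝ) < Real.exp (π*t)/2 := by positivity
    calc (Real.cosh (π*t))⁻¹ ≤ (Real.exp (π*t)/2)⁻¹ := by
          exact inv_anti₀ h2 h1
      _ = 2 * Real.exp (-π*t) := by
          rw [show -π*t = -(π*t) by ring, Real.exp_neg]; field_simp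
  have hIic : IntegrableOn (fun t : ℝ => (Real.cosh (π*t))⁻¹) (Iic 0) := by
    rw [← Measure.map_neg_eq_self (volume : Measure ℝ)]
    have m : MeasurableEmbedding fun x : ℝ => -x := (Homeomorph.neg ℝ).measurableEmbedding
    rw [m.integrableOn_map_iff]
    have : ((fun t : ℝ => (Real.cosh (π*t))⁻¹) ∘ fun x : ℝ => -x)
        = fun t : ℝ => (Real.cosh (π*t))⁻¹ := by
      funext t; simp [Function.comp, mul_neg, Real.cosh_neg]
    rw [this]
    simp only [neg_preimage, neg_Iic, neg_zero]
    exact (integrableOn_Ici_iff_integrableOn_Ioi).mpr hIoi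
  rw [← integrableOn_univ, ← Iic_union_Ioi (a := (0:ℝ))]
  exact hIic.union hIoi

lemma integrable_kernel (x : ℝ) :
    Integrable (fun t : ℝ =>
      Complex.exp (((x * t : ℝ) : ℂ) * Complex.I) / ((Real.cosh (π*t) : ℝ) : ℂ)) := by
  have cont : Continuous fun t : ℝ =>
      Complex.exp (((x * t : ℝ) : ℂ) * Complex.I) / ((Real.cosh (π*t) : ℝ) : ℂ) := by
    apply Continuous.div
    · exact Complex.continuous_exp.comp
        ((Complex.continuous_ofReal.comp (continuous_const.mul continuous_id)).mul
          continuous_const)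
    · exact Complex.continuous_ofReal.comp
        (Real.continuous_cosh.comp (continuous_const.mul continuous_id))
    · intro t
      exact_mod_cast (Real.cosh_pos (x := π*t)).ne'
  refine integrable_sech.mono' cont.aestronglyMeasurable
    (Filter.Eventually.of_forall fun t => ?_)
  rw [norm_div, Complex.norm_exp_ofReal_mul_I, Complex.norm_real, Real.norm_eq_abs,
    abs_of_pos (Real.cosh_pos (x := π*t))]
  rw [one_div]

lemma real_ratio (a b : ℝ) (ha : 0 < a) (hb : 0 < b) :
    Real.exp ((Real.log a - Real.log b)/2) / Real.cosh ((Real.log a - Real.log b)/2)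
      = 2*a/(a+b) := by
  set x := Real.log a - Real.log b with hxdef
  have hu : Real.exp (x/2) * Real.exp (x/2) = a/b := by
    rw [← Real.exp_add, show x/2+x/2 = x by ring, hxdef, Real.exp_sub,
      Real.exp_log ha, Real.exp_log hb]
  have hupos := Real.exp_pos (x/2)
  have hu2 : Real.exp (x/2) * Real.exp (x/2) * b = a := by
    rw [hu]; field_simp
  rw [Real.cosh_eq, Real.exp_neg]
  rw [div_eq_div_iff (by positivity) (by positivity)]
  field_simp
  nlinarith [hu2, hupos]

lemma pair_eq (a b : ℝ) (ha : 0 < a) (hb : 0 < b) (t : ℝ) :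
    (a:ℂ) ^ (Complex.I*(t:ℂ)+1/2) * (b:ℂ) ^ (-(Complex.I*(t:ℂ))-1/2) / ((Real.cosh (π*t):ℝ):ℂ)
    = ((Real.exp ((Real.log a - Real.log b)/2) : ℝ):ℂ) *
      (Complex.exp ((((Real.log a - Real.log b)*t : ℝ):ℂ) * Complex.I) / ((Real.cosh (π*t):ℝ):ℂ)) := by
  rw [cpow_ofReal_pos ha, cpow_ofReal_pos hb, ← Complex.exp_add,
    show ((Real.log a : ℂ) * (Complex.I*(t:ℂ)+1/2) + (Real.log b : ℂ) * (-(Complex.I*(t:ℂ))-1/2) : ℂ)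
      = (((Real.log a - Real.log b)/2 : ℝ):ℂ) + (((Real.log a - Real.log b)*t : ℝ):ℂ) * Complex.I
      from by push_cast; ring,
    Complex.exp_add, ← Complex.ofReal_exp]
  ring

lemma key_integrable (a b : ℝ) (ha : 0 < a) (hb : 0 < b) :
    Integrable (fun t : ℝ =>
      (a:ℂ) ^ (Complex.I*(t:ℂ)+1/2) * (b:ℂ) ^ (-(Complex.I*(t:ℂ))-1/2) / ((Real.cosh (π*t):ℝ):ℂ)) := by
  have : (fun t : ℝ =>
      (a:ℂ) ^ (Complex.I*(t:ℂ)+1/2) * (b:ℂ) ^ (-(Complex.I*(t:ℂ))-1/2) / ((Real.cosh (π*t):ℝ):ℂ))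
      = fun t : ℝ => ((Real.exp ((Real.log a - Real.log b)/2) : ℝ):ℂ) *
        (Complex.exp ((((Real.log a - Real.log b)*t : ℝ):ℂ) * Complex.I) / ((Real.cosh (π*t):ℝ):ℂ)) :=
    funext (pair_eq a b ha hb)
  rw [this]
  exact (integrable_kernel _).const_mul _

lemma key_integral (a b : ℝ) (ha : 0 < a) (hb : 0 < b) :
    (∫ t : ℝ, (a:ℂ) ^ (Complex.I*(t:ℂ)+1/2) * (b:ℂ) ^ (-(Complex.I*(t:ℂ))-1/2) /
      ((Real.cosh (π*t):ℝ):ℂ)) = ((2*a/(a+b) : ℝ):ℂ) := by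
  have h : (fun t : ℝ =>
      (a:ℂ) ^ (Complex.I*(t:ℂ)+1/2) * (b:ℂ) ^ (-(Complex.I*(t:ℂ))-1/2) / ((Real.cosh (π*t):ℝ):ℂ))
      = fun t : ℝ => ((Real.exp ((Real.log a - Real.log b)/2) : ℝ):ℂ) *
        (Complex.exp ((((Real.log a - Real.log b)*t : ℝ):ℂ) * Complex.I) / ((Real.cosh (π*t):ℝ):ℂ)) :=
    funext (pair_eq a b ha hb)
  rw [h, MeasureTheory.integral_const_mul, fourier_sech]
  rw [mul_one_div, ← Complex.ofReal_div, real_ratio a b ha hb]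



lemma triple_apply {n : ℕ} (V W U : Matrix (Fin n) (Fin n) ℂ) (i j : Fin n) :
    (V * W * U) i j = ∑ q, ∑ p, V i p * W p q * U q j := by
  rw [Matrix.mul_apply]
  refine Finset.sum_congr rfl fun q _ => ?_
  rw [Matrix.mul_apply, Finset.sum_mul]

theorem aux_main {n : ℕ} (g Y : Matrix (Fin n) (Fin n) ℂ) (hg : g.PosDef) (hY : star Y = Y) :
    star (Ig g Y) + Ig g Y = (2:ℂ) • Y := by
  classical
  have hpsd : g.PosSemidef := hg.posSemidef
  have hssemi : (matSqrt g).PosSemidef := (matSqrt_spec hpsd).1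
  have hs : (matSqrt g).IsHermitian := hssemi.1
  have hmul : matSqrt g * matSqrt g = g := (matSqrt_spec hpsd).2
  have hdetg : g.det ≠ 0 := hg.det_pos.ne'
  have hdets : (matSqrt g).det ≠ 0 := by
    intro h; apply hdetg; rw [← hmul, Matrix.det_mul, h, mul_zero]
  have hμpos : ∀ i, 0 < hs.eigenvalues i := by
    intro i
    rcases (hssemi.eigenvalues_nonneg i).lt_or_eq with h | h
    · exact h
    · exfalso
      apply hdets
      rw [hs.det_eq_prod_eigenvalues]
      refine Finset.prod_eq_zero (Finset.mem_univ i) ?_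
      have h' : hs.eigenvalues i = 0 := h.symm
      rw [h']
      norm_num
  set V : Matrix (Fin n) (Fin n) ℂ := (hs.eigenvectorUnitary : Matrix (Fin n) (Fin n) ℂ)
    with hVdef
  have hV1 : V * star V = 1 := Matrix.mem_unitaryGroup_iff.mp hs.eigenvectorUnitary.2
  have hCpow : ∀ z : ℂ, matCpow (matSqrt g) z
      = V * Matrix.diagonal (fun i => (hs.eigenvalues i : ℂ) ^ z) * star V :=
    fun z => dif_pos hs
  have hW : star (star V * Y * V) = star V * Y * V := by
    simp only [Matrix.star_mul, star_star, hY, Matrix.mul_assoc]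
  have hWc : ∀ p q, star ((star V * Y * V) p q) = (star V * Y * V) q p := by
    intro p q
    conv_rhs => rw [← hW]
    rw [Matrix.star_apply]
  have hVWV : V * (star V * Y * V) * star V = Y := by
    calc V * (star V * Y * V) * star V = (V * star V) * Y * (V * star V) := by
          simp only [Matrix.mul_assoc]
      _ = Y := by rw [hV1, Matrix.one_mul, Matrix.mul_one]
  -- the integral representation of each entry of `Ig g Y`
  have hint : ∀ (i j p q : Fin n), Integrable (fun t : ℝ =>
      V i p * (star V * Y * V) p q * star (V j q) *
        ((hs.eigenvalues p:ℂ) ^ (Complex.I*(t:ℂ)+1/2) *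
          (hs.eigenvalues q:ℂ) ^ (-(Complex.I*(t:ℂ))-1/2) / ((Real.cosh (π*t):ℝ):ℂ))) :=
    fun i j p q => (key_integrable _ _ (hμpos p) (hμpos q)).const_mul _
  have Ig_apply : ∀ (i j : Fin n), Ig g Y i j
      = ∑ q, ∑ p, V i p * (star V * Y * V) p q * star (V j q) *
          ((2 * hs.eigenvalues p / (hs.eigenvalues p + hs.eigenvalues q) : ℝ) : ℂ) := by
    intro i j
    have hfun : (fun t : ℝ => (matCpow (matSqrt g) (Complex.I * t + 1 / 2) * Y *
        matCpow (matSqrt g) (-(Complex.I * t) - 1 / 2)) i j / (Real.cosh (Real.pi * t) : ℂ))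
        = fun t : ℝ => ∑ q, ∑ p, V i p * (star V * Y * V) p q * star (V j q) *
            ((hs.eigenvalues p:ℂ) ^ (Complex.I*(t:ℂ)+1/2) *
              (hs.eigenvalues q:ℂ) ^ (-(Complex.I*(t:ℂ))-1/2) / ((Real.cosh (π*t):ℝ):ℂ)) := by
      funext t
      rw [hCpow, hCpow]
      rw [show V * Matrix.diagonal (fun i => (hs.eigenvalues i:ℂ) ^ (Complex.I * t + 1/2)) * star V
            * Y * (V * Matrix.diagonal (fun i => (hs.eigenvalues i:ℂ) ^ (-(Complex.I * t) - 1/2))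
              * star V)
          = V * (Matrix.diagonal (fun i => (hs.eigenvalues i:ℂ) ^ (Complex.I * t + 1/2)) *
              (star V * Y * V) *
              Matrix.diagonal (fun i => (hs.eigenvalues i:ℂ) ^ (-(Complex.I * t) - 1/2))) * star V
        from by simp only [Matrix.mul_assoc]]
      rw [triple_apply, Finset.sum_div]
      refine Finset.sum_congr rfl fun q _ => ?_
      rw [Finset.sum_div]
      refine Finset.sum_congr rfl fun p _ => ?_
      simp only [Matrix.diagonal_mul, Matrix.mul_diagonal, Matrix.star_apply]
      ring
    show (∫ t : ℝ, (matCpow (matSqrt g) (Complex.I * t + 1 / 2) * Y *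
        matCpow (matSqrt g) (-(Complex.I * t) - 1 / 2)) i j / (Real.cosh (Real.pi * t) : ℂ)) = _
    rw [hfun, MeasureTheory.integral_finset_sum _
      (fun q _ => integrable_finset_sum _ (fun p _ => hint i j p q))]
    refine Finset.sum_congr rfl fun q _ => ?_
    rw [MeasureTheory.integral_finset_sum _ (fun p _ => hint i j p q)]
    refine Finset.sum_congr rfl fun p _ => ?_
    rw [MeasureTheory.integral_const_mul, key_integral _ _ (hμpos p) (hμpos q)]
  ext i j
  simp only [Matrix.add_apply, Matrix.smul_apply, Matrix.star_apply, smul_eq_mul]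
  rw [Ig_apply j i, Ig_apply i j, star_sum]
  simp only [star_sum, star_mul', star_star, hWc, Complex.star_def, Complex.conj_ofReal, Complex.conj_conj]
  have hadd : ∀ p q : Fin n,
      ((2 * hs.eigenvalues q / (hs.eigenvalues q + hs.eigenvalues p) : ℝ) : ℂ)
        + ((2 * hs.eigenvalues p / (hs.eigenvalues p + hs.eigenvalues q) : ℝ) : ℂ) = 2 := by
    intro p q
    have hpq : (0:ℝ) < hs.eigenvalues p + hs.eigenvalues q := by
      have := hμpos p; have := hμpos q; linarith
    have hr : (2 * hs.eigenvalues q / (hs.eigenvalues q + hs.eigenvalues p))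
        + (2 * hs.eigenvalues p / (hs.eigenvalues p + hs.eigenvalues q)) = 2 := by
      rw [add_comm (hs.eigenvalues q) (hs.eigenvalues p)]
      field_simp
      ring
    rw [← Complex.ofReal_add, hr]
    norm_num
  rw [Finset.sum_comm, ← Finset.sum_add_distrib]
  calc (∑ q : Fin n, (∑ p : Fin n,
          (starRingEnd ℂ) (V j q) * (star V * Y * V) p q * V i p *
            ((2 * hs.eigenvalues q / (hs.eigenvalues q + hs.eigenvalues p) : ℝ):ℂ) +
        ∑ p : Fin n,
          V i p * (star V * Y * V) p q * (starRingEnd ℂ) (V j q) *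
            ((2 * hs.eigenvalues p / (hs.eigenvalues p + hs.eigenvalues q) : ℝ):ℂ)))
      = ∑ q : Fin n, ∑ p : Fin n,
          2 * (V i p * (star V * Y * V) p q * (starRingEnd ℂ) (V j q)) := by
        refine Finset.sum_congr rfl fun q _ => ?_
        rw [← Finset.sum_add_distrib]
        refine Finset.sum_congr rfl fun p _ => ?_
        linear_combination (V i p * (star V * Y * V) p q * (starRingEnd ℂ) (V j q)) * hadd p q
    _ = 2 * Y i j := by
        simp only [← Finset.mul_sum]
        congr 1
        conv_rhs => rw [← hVWV, triple_apply]
        simp only [Matrix.star_apply, Complex.star_def]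

/-- For `g` positive definite Hermitian, `λ(A,g)` is skew-Hermitian. -/
theorem lamLift_skewHermitian {n : ℕ} (A g : Matrix (Fin n) (Fin n) ℂ) (hg : g.PosDef) :
    star (lamLift A g) = -lamLift A g := by
  classical
  have hpsd : g.PosSemidef := hg.posSemidef
  have hssemi : (matSqrt g).PosSemidef := (matSqrt_spec hpsd).1
  have hs : (matSqrt g).IsHermitian := hssemi.1
  have hmul : matSqrt g * matSqrt g = g := (matSqrt_spec hpsd).2
  have hdetg : g.det ≠ 0 := hg.det_pos.ne'
  have hdets : IsUnit (matSqrt g).det := by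
    rw [isUnit_iff_ne_zero]
    intro h; apply hdetg; rw [← hmul, Matrix.det_mul, h, mul_zero]
  have hinv1 : (matSqrt g)⁻¹ * matSqrt g = 1 := Matrix.nonsing_inv_mul _ hdets
  have hinv2 : matSqrt g * (matSqrt g)⁻¹ = 1 := Matrix.mul_nonsing_inv _ hdets
  have hginv1 : (matSqrt g)⁻¹ * g = matSqrt g := by
    nth_rewrite 2 [← hmul]
    rw [← Matrix.mul_assoc, hinv1, Matrix.one_mul]
  have hginv2 : g * (matSqrt g)⁻¹ = matSqrt g := by
    nth_rewrite 1 [← hmul]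
    rw [Matrix.mul_assoc, hinv2, Matrix.mul_one]
  have hgh : star g = g := hg.isHermitian
  have hss : star (matSqrt g) = matSqrt g := hs
  have hsinv : star ((matSqrt g)⁻¹) = (matSqrt g)⁻¹ := by
    rw [Matrix.star_eq_conjTranspose, Matrix.conjTranspose_nonsing_inv,
      ← Matrix.star_eq_conjTranspose, hss]
  set Y : Matrix (Fin n) (Fin n) ℂ := -(star A * g) - g * A with hYdef
  have hY : star Y = Y := by
    rw [hYdef, star_sub, star_neg, Matrix.star_mul, Matrix.star_mul, star_star, hgh]
    abel
  have hIg := aux_main g Y hg hY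
  have hstarL : star (lamLift A g)
      = (1 / 2 : ℂ) • ((matSqrt g)⁻¹ * (star (Ig g Y) * (matSqrt g)⁻¹))
        + (matSqrt g)⁻¹ * (star A * matSqrt g) := by
    simp only [lamLift, ← hYdef, star_add, star_smul, Matrix.star_mul, star_star, hsinv, hss,
      star_div₀, star_one, star_ofNat, Matrix.mul_assoc]
  have e1 : (1 / 2 : ℂ) • ((matSqrt g)⁻¹ * (star (Ig g Y) * (matSqrt g)⁻¹))
      + (1 / 2 : ℂ) • ((matSqrt g)⁻¹ * Ig g Y * (matSqrt g)⁻¹)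
      = (matSqrt g)⁻¹ * (Y * (matSqrt g)⁻¹) := by
    rw [Matrix.mul_assoc ((matSqrt g)⁻¹) (Ig g Y) ((matSqrt g)⁻¹), ← smul_add,
      ← Matrix.mul_add, ← Matrix.add_mul, hIg, Matrix.smul_mul, Matrix.mul_smul,
      smul_smul]
    norm_num
  have e2 : (matSqrt g)⁻¹ * (Y * (matSqrt g)⁻¹)
      = -((matSqrt g)⁻¹ * (star A * matSqrt g)) - matSqrt g * A * (matSqrt g)⁻¹ := by
    calc (matSqrt g)⁻¹ * (Y * (matSqrt g)⁻¹)
        = (matSqrt g)⁻¹ * ((-(star A * g) - g * A) * (matSqrt g)⁻¹) := by rw [hYdef]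
      _ = -((matSqrt g)⁻¹ * (star A * (g * (matSqrt g)⁻¹)))
          - (matSqrt g)⁻¹ * (g * (A * (matSqrt g)⁻¹)) := by
          simp only [Matrix.sub_mul, Matrix.neg_mul, Matrix.mul_sub, Matrix.mul_neg,
            Matrix.mul_assoc]
      _ = -((matSqrt g)⁻¹ * (star A * matSqrt g)) - matSqrt g * A * (matSqrt g)⁻¹ := by
          rw [hginv2, ← Matrix.mul_assoc ((matSqrt g)⁻¹) g (A * (matSqrt g)⁻¹), hginv1,
            ← Matrix.mul_assoc (matSqrt g) A ((matSqrt g)⁻¹)]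
  have key : star (lamLift A g) + lamLift A g = 0 := by
    rw [hstarL]
    simp only [lamLift, ← hYdef]
    calc (1 / 2 : ℂ) • ((matSqrt g)⁻¹ * (star (Ig g Y) * (matSqrt g)⁻¹))
          + (matSqrt g)⁻¹ * (star A * matSqrt g)
          + ((1 / 2 : ℂ) • ((matSqrt g)⁻¹ * Ig g Y * (matSqrt g)⁻¹)
            + matSqrt g * A * (matSqrt g)⁻¹)
        = ((1 / 2 : ℂ) • ((matSqrt g)⁻¹ * (star (Ig g Y) * (matSqrt g)⁻¹))
            + (1 / 2 : ℂ) • ((matSqrt g)⁻¹ * Ig g Y * (matSqrt g)⁻¹))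
          + ((matSqrt g)⁻¹ * (star A * matSqrt g) + matSqrt g * A * (matSqrt g)⁻¹) := by
          abel
      _ = (-((matSqrt g)⁻¹ * (star A * matSqrt g)) - matSqrt g * A * (matSqrt g)⁻¹)
          + ((matSqrt g)⁻¹ * (star A * matSqrt g) + matSqrt g * A * (matSqrt g)⁻¹) := by
          rw [e1, e2]
      _ = 0 := by abel
  exact eq_neg_of_add_eq_zero_left key

end MatrixPart
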